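/- Let E be a real vector space, Γ : E ⇉ E a set-valued map with finitely closed convex values. Then Γ satisfies the KKM condition (for every finite A ⊆ D(Γ), [A] ⊆ ⋃_{x∈A} Γ(x)) if and only if Γ satisfies the finite intersection property on convex hulls (for every finite A ⊆ D(Γ), [A] ∩ ⋂_{x∈A} Γ(x) ≠ ∅). -/

import Mathlib

/-- A set `S` in a real vector space is *finitely closed* if its preimage under any
linear map from a Euclidean space `ℝⁿ` is closed. -/
def FinitelyClosed {E : Type*} [AddCommGroup E] [Module ℝ E] (S : Set E) : Prop :=
  ∀ (n : ℕ) (f : (Fin n → ℝ) →ₗ[ℝ] E), IsClosed (f ⁻¹' S)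

open Set

section Core

variable {V : Type*} [NormedAddCommGroup V] [NormedSpace ℝ V]

/-- crossing point of a hyperplane on a segment -/
lemma exists_seg_cross (φ : V →L[ℝ] ℝ) {x y : V} {u : ℝ} (hx : φ x ≤ u) (hy : u ≤ φ y) :
    ∃ z ∈ segment ℝ x y, φ z = u := by
  have hcont : ContinuousOn (fun t : ℝ => φ ((1 - t) • x + t • y)) (Icc 0 1) := by
    fun_prop
  have := intermediate_value_Icc (zero_le_one (α := ℝ)) hcont
  have hu : u ∈ Icc (φ ((1-(0:ℝ)) • x + (0:ℝ) • y)) (φ ((1-(1:ℝ)) • x + (1:ℝ) • y)) := by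
    simp [hx, hy]
  obtain ⟨t, ht, htu⟩ := this hu
  exact ⟨(1 - t) • x + t • y, by rw [segment_eq_image]; exact ⟨t, ht, rfl⟩, htu⟩

/-- Core intersection lemma (elementary convex KKM / Berge-type). -/
lemma core_lemma :
    ∀ (n : ℕ) (K : Fin (n+1) → Set V) (a : Fin (n+1) → V),
      (∀ i, Convex ℝ (K i)) → (∀ i, IsClosed (K i)) →
      (∀ i j, i ≠ j → a i ∈ K j) →
      convexHull ℝ (Set.range a) ⊆ ⋃ i, K i →
      (convexHull ℝ (Set.range a) ∩ ⋂ i, K i).Nonempty := by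
  intro n
  induction n with
  | zero =>
    intro K a hconv hcl hmem hcover
    refine ⟨a 0, subset_convexHull ℝ _ ⟨0, rfl⟩, ?_⟩
    have := hcover (subset_convexHull ℝ _ ⟨0, rfl⟩)
    rw [Set.mem_iUnion] at this
    obtain ⟨i, hi⟩ := this
    rw [Set.mem_iInter]
    intro j
    have hji : j = i := Fin.ext (by omega)
    rwa [hji]
  | succ n IH =>
    intro K a hconv hcl hmem hcover
    by_contra hc
    rw [Set.not_nonempty_iff_eq_empty] at hc
    set Sg : Set V := convexHull ℝ (Set.range a) with hSg
    have hSgconv : Convex ℝ Sg := convex_convexHull ℝ _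
    have hSgcomp : IsCompact Sg := (Set.finite_range a).isCompact_convexHull ℝ
    have haSg : ∀ i, a i ∈ Sg := fun i => subset_convexHull ℝ _ ⟨i, rfl⟩
    -- P and T
    set P : Set V := Sg ∩ ⋂ i : Fin (n+1), K i.succ with hP
    set T : Set V := Sg ∩ K 0 with hT
    have hPcomp : IsCompact P := hSgcomp.inter_right (isClosed_iInter fun i => hcl _)
    have hPconv : Convex ℝ P := hSgconv.inter (convex_iInter fun i => hconv _)
    have hTconv : Convex ℝ T := hSgconv.inter (hconv 0)
    have hTcl : IsClosed T := (hSgcomp.isClosed).inter (hcl 0)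
    have hdisj : Disjoint P T := by
      rw [Set.disjoint_iff_inter_eq_empty]
      rw [← Set.subset_empty_iff, ← hc]
      rintro x ⟨⟨hx1, hx2⟩, hx3, hx4⟩
      refine ⟨hx1, ?_⟩
      rw [Set.mem_iInter]
      intro j
      refine Fin.cases hx4 (fun i => ?_) j
      exact Set.mem_iInter.1 hx2 i
    obtain ⟨φ, u, v, hPu, huv, hTv⟩ :=
      geometric_hahn_banach_compact_closed hPconv hPcomp hTconv hTcl hdisj
    -- crossing points
    have hb : ∀ m : Fin (n+1), ∃ b, b ∈ Sg ∧ φ b = u ∧ ∀ j : Fin (n+1), j ≠ m → b ∈ K j.succ := by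
      intro m
      have hx0 : φ (a 0) ≤ u := by
        refine le_of_lt (hPu (a 0) ⟨haSg 0, ?_⟩)
        exact Set.mem_iInter.2 fun i => hmem 0 i.succ (Fin.succ_ne_zero i).symm
      have hy0 : u ≤ φ (a m.succ) := by
        have : a m.succ ∈ T := ⟨haSg _, hmem m.succ 0 (Fin.succ_ne_zero m)⟩
        exact le_of_lt (lt_trans huv (hTv _ this))
      obtain ⟨z, hzseg, hzu⟩ := exists_seg_cross φ hx0 hy0
      refine ⟨z, ?_, hzu, ?_⟩
      · exact hSgconv.segment_subset (haSg 0) (haSg m.succ) hzseg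
      · intro j hj
        have h1 : a 0 ∈ K j.succ := hmem 0 j.succ (Fin.succ_ne_zero j).symm
        have h2 : a m.succ ∈ K j.succ := by
          refine hmem m.succ j.succ ?_
          simpa [Fin.succ_inj] using (fun h => hj h.symm)
        exact (hconv j.succ).segment_subset h1 h2 hzseg
    choose b hbSg hbu hbK using hb
    -- apply induction
    set H : Set V := {x | φ x = u} with hH
    have hHconv : Convex ℝ H := convex_hyperplane (φ.toLinearMap.isLinear) u
    have hHcl : IsClosed H := isClosed_eq φ.continuous continuous_const
    set K' : Fin (n+1) → Set V := fun j => K j.succ ∩ H with hK'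
    have hhullb : convexHull ℝ (Set.range b) ⊆ Sg ∩ H := by
      refine convexHull_min ?_ (hSgconv.inter hHconv)
      rintro x ⟨m, rfl⟩
      exact ⟨hbSg m, hbu m⟩
    obtain ⟨q, hq1, hq2⟩ := IH K' b
      (fun i => (hconv _).inter hHconv)
      (fun i => (hcl _).inter hHcl)
      (fun i j hij => ⟨hbK i j (fun h => hij h.symm) , hbu i⟩)
      (by
        intro x hx
        obtain ⟨hxSg, hxH⟩ := hhullb hx
        have := hcover hxSg
        rw [Set.mem_iUnion] at this
        obtain ⟨j, hj⟩ := this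
        refine Fin.cases ?_ (fun i hji => ?_) j hj
        · intro hx0
          have : x ∈ T := ⟨hxSg, hx0⟩
          exact absurd (hTv x this) (by rw [hxH]; exact not_lt.2 huv.le)
        · exact Set.mem_iUnion.2 ⟨i, hji, hxH⟩)
    -- contradiction
    have hqP : q ∈ P := by
      refine ⟨(hhullb hq1).1, Set.mem_iInter.2 fun i => (Set.mem_iInter.1 hq2 i).1⟩
    have h1 : φ q < u := hPu q hqP
    have h2 : φ q = u := (hhullb hq1).2
    linarith

lemma core_lemma' (n : ℕ) (hn : n ≠ 0) (K : Fin n → Set V) (a : Fin n → V)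
    (hconv : ∀ i, Convex ℝ (K i)) (hcl : ∀ i, IsClosed (K i))
    (hmem : ∀ i j, i ≠ j → a i ∈ K j)
    (hcover : convexHull ℝ (Set.range a) ⊆ ⋃ i, K i) :
    (convexHull ℝ (Set.range a) ∩ ⋂ i, K i).Nonempty := by
  obtain ⟨k, rfl⟩ := Nat.exists_eq_succ_of_ne_zero hn
  exact core_lemma k K a hconv hcl hmem hcover

end Core

section Main

variable {E : Type*} [AddCommGroup E] [Module ℝ E]

lemma kkm_to_fip (Γ : E → Set E) (hconv : ∀ x, Convex ℝ (Γ x))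
    (hfc : ∀ x, FinitelyClosed (Γ x))
    (kkm : ∀ A : Finset E, (↑A : Set E) ⊆ {x | (Γ x).Nonempty} →
      convexHull ℝ (↑A : Set E) ⊆ ⋃ x ∈ A, Γ x) :
    ∀ A : Finset E, A.Nonempty → (↑A : Set E) ⊆ {x | (Γ x).Nonempty} →
      (convexHull ℝ (↑A : Set E) ∩ ⋂ x ∈ A, Γ x).Nonempty := by
  intro A
  induction A using Finset.strongInduction with
  | _ A IH =>
    classical
    intro hAne hAD
    set m := A.card with hm
    have hm0 : m ≠ 0 := Finset.card_ne_zero.2 hAne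
    set σ : Fin m → E := fun i => ((A.equivFin.symm i : A) : E) with hσ
    have hσA : ∀ i, σ i ∈ A := fun i => (A.equivFin.symm i).2
    have hσinj : Function.Injective σ := fun i j hij => by
      have := Subtype.ext hij (p := fun x => x ∈ A)
      exact A.equivFin.symm.injective this
    have hσsurj : ∀ x ∈ A, ∃ i, σ i = x := fun x hx => ⟨A.equivFin ⟨x, hx⟩, by simp [hσ]⟩
    by_cases hcard : m = 1
    · -- singleton case
      obtain ⟨x, rfl⟩ := Finset.card_eq_one.1 (hm ▸ hcard)
      have hx : x ∈ convexHull ℝ (↑({x} : Finset E) : Set E) := by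
        apply subset_convexHull; simp
      have := kkm {x} hAD hx
      simp only [Finset.mem_singleton, Set.mem_iUnion] at this
      obtain ⟨y, rfl, hy⟩ := this
      exact ⟨y, hx, by simpa using hy⟩
    · -- m ≥ 2
      have hm2 : 2 ≤ m := by omega
      have hkey : ∀ i : Fin m, ∃ p, p ∈ convexHull ℝ (↑(A.erase (σ i)) : Set E) ∧
          ∀ x ∈ A.erase (σ i), p ∈ Γ x := by
        intro i
        have hss : A.erase (σ i) ⊂ A := Finset.erase_ssubset (hσA i)
        have hne : (A.erase (σ i)).Nonempty := by
          rw [← Finset.card_pos, Finset.card_erase_of_mem (hσA i)]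
          omega
        obtain ⟨p, hp1, hp2⟩ := IH _ hss hne ((Finset.coe_subset.2 hss.subset).trans hAD)
        exact ⟨p, hp1, fun x hx => by
          simp only [Set.mem_iInter] at hp2; exact hp2 x hx⟩
      choose a ha1 ha2 using hkey
      have haA : ∀ i, a i ∈ convexHull ℝ (↑A : Set E) := fun i =>
        convexHull_mono (Finset.coe_subset.2 (Finset.erase_subset _ _)) (ha1 i)
      set f : (Fin m → ℝ) →ₗ[ℝ] E := Fintype.linearCombination ℝ a with hf
      set K : Fin m → Set (Fin m → ℝ) := fun i => f ⁻¹' (Γ (σ i)) with hK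
      set e : Fin m → (Fin m → ℝ) := fun i => Pi.single i 1 with he
      have hfe : ∀ i, f (e i) = a i := by
        intro i; simp [hf, he]
      have hrange : f '' (Set.range e) = Set.range a := by
        rw [← Set.range_comp]
        exact congrArg Set.range (funext fun i => hfe i)
      have hhull : ∀ x ∈ convexHull ℝ (Set.range e), f x ∈ convexHull ℝ (Set.range a) := by
        intro x hx
        have : f x ∈ f '' (convexHull ℝ (Set.range e)) := ⟨x, hx, rfl⟩
        rwa [f.image_convexHull, hrange] at this
      have hrangeA : convexHull ℝ (Set.range a) ⊆ convexHull ℝ (↑A : Set E) := by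
        refine convexHull_min ?_ (convex_convexHull ℝ _)
        rintro x ⟨i, rfl⟩
        exact haA i
      obtain ⟨q, hq1, hq2⟩ := core_lemma' m hm0 K e
        (fun i => (hconv (σ i)).linear_preimage f)
        (fun i => hfc (σ i) m f)
        (fun i j hij => by
          show f (e i) ∈ Γ (σ j)
          rw [hfe]
          refine ha2 i (σ j) (Finset.mem_erase.2 ⟨fun h => hij (hσinj h).symm, hσA j⟩))
        (by
          intro x hx
          have hfx : f x ∈ convexHull ℝ (↑A : Set E) := hrangeA (hhull x hx)
          have := kkm A hAD hfx
          rw [Set.mem_iUnion₂] at this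
          obtain ⟨y, hyA, hy⟩ := this
          obtain ⟨i, rfl⟩ := hσsurj y hyA
          exact Set.mem_iUnion.2 ⟨i, hy⟩)
      refine ⟨f q, hrangeA (hhull q hq1), ?_⟩
      rw [Set.mem_iInter₂]
      intro x hx
      obtain ⟨i, rfl⟩ := hσsurj x hx
      exact Set.mem_iInter.1 hq2 i

lemma fip_to_kkm (Γ : E → Set E) (hconv : ∀ x, Convex ℝ (Γ x))
    (fip : ∀ A : Finset E, A.Nonempty → (↑A : Set E) ⊆ {x | (Γ x).Nonempty} →
      (convexHull ℝ (↑A : Set E) ∩ ⋂ x ∈ A, Γ x).Nonempty) :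
    ∀ A : Finset E, (↑A : Set E) ⊆ {x | (Γ x).Nonempty} →
      convexHull ℝ (↑A : Set E) ⊆ ⋃ x ∈ A, Γ x := by
  intro A
  induction A using Finset.strongInduction with
  | _ A IH =>
    classical
    intro hAD y hy
    have hAne : A.Nonempty := by
      by_contra h
      rw [Finset.not_nonempty_iff_eq_empty] at h
      subst h
      simp at hy
    obtain ⟨z, hz1, hz2⟩ := fip A hAne hAD
    simp only [Set.mem_iInter] at hz2
    rw [Finset.convexHull_eq] at hy hz1
    obtain ⟨l, hl0, hl1, hly⟩ := hy
    obtain ⟨mm, hm0, hm1, hmz⟩ := hz1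
    rw [Finset.centerMass_eq_of_sum_1 _ _ hl1] at hly
    rw [Finset.centerMass_eq_of_sum_1 _ _ hm1] at hmz
    simp only [id_eq] at hly hmz
    by_cases hcase : ∀ x ∈ A, mm x ≤ l x
    · have hlm : ∀ x ∈ A, l x = mm x := by
        intro x hx
        by_contra hne
        have hlt : mm x < l x := lt_of_le_of_ne (hcase x hx) (fun h => hne h.symm)
        have hsum : ∑ x ∈ A, mm x < ∑ x ∈ A, l x :=
          Finset.sum_lt_sum hcase ⟨x, hx, hlt⟩
        rw [hl1, hm1] at hsum
        exact lt_irrefl 1 hsum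
      have hyz : y = z := by
        rw [← hly, ← hmz]
        exact Finset.sum_congr rfl fun x hx => by rw [hlm x hx]
      obtain ⟨x0, hx0⟩ := hAne
      exact Set.mem_iUnion₂.2 ⟨x0, hx0, hyz ▸ hz2 x0 hx0⟩
    · push_neg at hcase
      obtain ⟨x1, hx1A, hx1⟩ := hcase
      set B := A.filter (fun x => l x < mm x) with hB
      have hBne : B.Nonempty := ⟨x1, Finset.mem_filter.2 ⟨hx1A, hx1⟩⟩
      set r : E → ℝ := fun x => mm x / (mm x - l x) with hr
      obtain ⟨x0, hx0B, hx0min⟩ := B.exists_min_image r hBne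
      have hx0A : x0 ∈ A := (Finset.mem_filter.1 hx0B).1
      have hx0lt : l x0 < mm x0 := (Finset.mem_filter.1 hx0B).2
      set t : ℝ := r x0 with ht
      have hden : (0:ℝ) < mm x0 - l x0 := by linarith
      have ht1 : 1 ≤ t := by
        rw [ht, hr, le_div_iff₀ hden]
        have := hl0 x0 hx0A
        linarith
      have ht0 : 0 < t := lt_of_lt_of_le one_pos ht1
      set ν : E → ℝ := fun x => mm x + t * (l x - mm x) with hν
      have hν0 : ∀ x ∈ A, 0 ≤ ν x := by
        intro x hx
        by_cases hxB : l x < mm x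
        · have hxB' : x ∈ B := Finset.mem_filter.2 ⟨hx, hxB⟩
          have htle : t ≤ r x := hx0min x hxB'
          have hdx : (0:ℝ) < mm x - l x := by linarith
          rw [hr, le_div_iff₀ hdx] at htle
          simp only [hν]
          nlinarith
        · push_neg at hxB
          have := hm0 x hx
          simp only [hν]
          nlinarith
      have hνx0 : ν x0 = 0 := by
        have hne : mm x0 - l x0 ≠ 0 := ne_of_gt hden
        simp only [hν, ht, hr]
        field_simp
        ring
      have hν1 : ∑ x ∈ A, ν x = 1 := by
        simp only [hν, mul_sub]
        rw [Finset.sum_add_distrib, Finset.sum_sub_distrib, ← Finset.mul_sum,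
          ← Finset.mul_sum, hl1, hm1]
        ring
      set A' := A.erase x0 with hA'
      have hν1' : ∑ x ∈ A', ν x = 1 := by
        rw [hA', Finset.sum_erase _ hνx0, hν1]
      set w : E := ∑ x ∈ A', ν x • x with hw
      have hwhull : w ∈ convexHull ℝ (↑A' : Set E) := by
        have := A'.centerMass_mem_convexHull (w := ν) (z := id)
          (fun i hi => hν0 i (Finset.mem_of_mem_erase hi))
          (by rw [hν1']; exact one_pos) (fun i hi => Finset.mem_coe.2 hi)
        rwa [Finset.centerMass_eq_of_sum_1 _ _ hν1'] at this
      have hwA : ∑ x ∈ A, ν x • x = w := by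
        rw [hw, hA', Finset.sum_erase _ (by rw [hνx0, zero_smul])]
      -- w = z + t • (y - z)
      have hkey : w = z + t • (y - z) := by
        have h1 : ∀ x ∈ A, ν x • x = mm x • x + t • (l x • x - mm x • x) := by
          intro x hx
          simp only [hν]
          simp [add_smul, smul_sub, mul_smul, sub_smul]
        calc w = ∑ x ∈ A, ν x • x := hwA.symm
        _ = ∑ x ∈ A, (mm x • x + t • (l x • x - mm x • x)) := Finset.sum_congr rfl h1
        _ = (∑ x ∈ A, mm x • x) + t • ((∑ x ∈ A, l x • x) - ∑ x ∈ A, mm x • x) := by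
              rw [Finset.sum_add_distrib]
              congr 1
              rw [← Finset.sum_sub_distrib, Finset.smul_sum]
        _ = z + t • (y - z) := by rw [hmz, hly]
      have hyzw : y = (1 - t⁻¹) • z + t⁻¹ • w := by
        have h2 : t⁻¹ • (z + t • (y - z)) = t⁻¹ • z + y - z := by
          rw [smul_add, smul_smul, inv_mul_cancel₀ (ne_of_gt ht0), one_smul]
          abel
        rw [hkey, h2, sub_smul, one_smul]
        abel
      have hA'ss : A' ⊂ A := Finset.erase_ssubset hx0A
      have hwU := IH A' hA'ss ((Finset.coe_subset.2 hA'ss.subset).trans hAD) hwhull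
      rw [Set.mem_iUnion₂] at hwU
      obtain ⟨x2, hx2A', hwx2⟩ := hwU
      have hx2A : x2 ∈ A := Finset.mem_of_mem_erase hx2A'
      have hzx2 : z ∈ Γ x2 := hz2 x2 hx2A
      have hyx2 : y ∈ Γ x2 := by
        rw [hyzw]
        refine (hconv x2) hzx2 hwx2 ?_ ?_ (by ring)
        · have : t⁻¹ ≤ 1 := by
            rw [inv_le_one_iff₀]; right; exact ht1
          linarith
        · positivity
      exact Set.mem_iUnion₂.2 ⟨x2, hx2A, hyx2⟩

end Main

/-- For convex-valued maps with finitely closed values, the KKM condition is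
equivalent to the finite intersection property on convex hulls. -/
theorem convex_kkm_iff_fip {E : Type*} [AddCommGroup E] [Module ℝ E]
    (Γ : E → Set E)
    (hconv : ∀ x, Convex ℝ (Γ x))
    (hfc : ∀ x, FinitelyClosed (Γ x)) :
    (∀ A : Finset E, (↑A : Set E) ⊆ {x | (Γ x).Nonempty} →
      convexHull ℝ (↑A : Set E) ⊆ ⋃ x ∈ A, Γ x) ↔
    (∀ A : Finset E, A.Nonempty → (↑A : Set E) ⊆ {x | (Γ x).Nonempty} →
      (convexHull ℝ (↑A : Set E) ∩ ⋂ x ∈ A, Γ x).Nonempty) := by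
  constructor
  · exact kkm_to_fip Γ hconv hfc
  · exact fip_to_kkm Γ hconv
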